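/- arXiv:2409.06021 — 2 statements merged into one kernel-verified Lean document; each statement's English description precedes it below -/
import Mathlib

section
/- Let G be a graph, x ∈ V(G) with N_G(x) = {y_1,...,y_n}. Then for all 1 ≤ k ≤ ν(G), ((I(G)^{[k]} + ⟨x y_1, ..., x y_n⟩) : x) = I(G \ {x, y_1, ..., y_n})^{[k]} + ⟨y_1, ..., y_n⟩. -/
open MvPolynomial

noncomputable section

/-- The product of the two variables corresponding to the endpoints of an edge. -/
def edgeProd (K : Type*) [CommSemiring K] {V : Type*} (e : Sym2 V) : MvPolynomial V K :=
  Sym2.lift ⟨fun a b => X a * X b, fun a b => mul_comm _ _⟩ e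

/-- The edge ideal of a simple graph. -/
def edgeIdeal (K : Type*) [CommSemiring K] {V : Type*} (G : SimpleGraph V) :
    Ideal (MvPolynomial V K) :=
  Ideal.span {p | ∃ e ∈ G.edgeSet, p = edgeProd K e}

/-- A finite set of edges of `G` forming a matching (pairwise disjoint edges). -/
def IsMatchingSet {V : Type*} (G : SimpleGraph V) (M : Finset (Sym2 V)) : Prop :=
  (↑M : Set (Sym2 V)) ⊆ G.edgeSet ∧
    (↑M : Set (Sym2 V)).Pairwise fun e f => ∀ v, v ∈ e → v ∉ f

/-- The matching number of a graph: the maximum size of a matching. -/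
def matchingNumber {V : Type*} (G : SimpleGraph V) : ℕ :=
  sSup {k | ∃ M : Finset (Sym2 V), IsMatchingSet G M ∧ M.card = k}

/-- The ideal generated by the squarefree monomials `∏_{e ∈ M} x_e` over all
`k`-matchings `M` of `G`; this is the `k`-th squarefree (matching) power of the edge ideal. -/
def matchingPow (K : Type*) [CommSemiring K] {V : Type*} (G : SimpleGraph V) (k : ℕ) :
    Ideal (MvPolynomial V K) :=
  Ideal.span {p | ∃ M : Finset (Sym2 V), IsMatchingSet G M ∧ M.card = k ∧
    p = ∏ e ∈ M, edgeProd K e}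

/-- The `k`-th squarefree power of an ideal: the ideal generated by all squarefree
monomials belonging to `I ^ k`. -/
def sqfreePow {K V : Type*} [CommSemiring K] (I : Ideal (MvPolynomial V K)) (k : ℕ) :
    Ideal (MvPolynomial V K) :=
  Ideal.span {p | (∃ A : Finset V, p = ∏ v ∈ A, X v) ∧ p ∈ I ^ k}

/-- Deleting a set of vertices from a graph (keeping the ambient vertex type:
all edges meeting `W` are removed). -/
def delVerts {V : Type*} (G : SimpleGraph V) (W : Set V) : SimpleGraph V where
  Adj a b := G.Adj a b ∧ a ∉ W ∧ b ∉ W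
  symm := ⟨fun a b h => ⟨h.1.symm, h.2.2, h.2.1⟩⟩
  loopless := ⟨fun a h => G.irrefl h.1⟩

/-- The whisker graph `W(G)`: to each vertex `x` of `G` (viewed as `inl x`) one
attaches a new pendant vertex `inr x`. -/
def whiskerGraph {V : Type*} (G : SimpleGraph V) : SimpleGraph (V ⊕ V) :=
  SimpleGraph.fromRel fun a b =>
    (∃ u v, G.Adj u v ∧ a = Sum.inl u ∧ b = Sum.inl v) ∨ (∃ u, a = Sum.inl u ∧ b = Sum.inr u)

/-- The depth of `R/I` (w.r.t. the graded maximal ideal generated by the variables),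
defined as the supremum of lengths of `R/I`-regular sequences of elements of that ideal. -/
def quotDepth {K V : Type*} [Field K] (I : Ideal (MvPolynomial V K)) : ℕ :=
  sSup {n | ∃ rs : List (MvPolynomial V K), rs.length = n ∧
    (∀ r ∈ rs, r ∈ Ideal.span (Set.range (X : V → MvPolynomial V K))) ∧
    RingTheory.Sequence.IsRegular (MvPolynomial V K ⧸ I) rs}

/-- A finite graded free resolution of an ideal `I` of a polynomial ring, with
`rk i` the rank of the `i`-th free module and `deg i t` the degree (twist) of its
`t`-th basis element. -/
structure GradedFreeResolution {K V : Type*} [Field K] (I : Ideal (MvPolynomial V K)) where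
  rk : ℕ → ℕ
  deg : (i : ℕ) → Fin (rk i) → ℕ
  len : ℕ
  rk_eq_zero : ∀ i, len < i → rk i = 0
  aug : (Fin (rk 0) → MvPolynomial V K) →ₗ[MvPolynomial V K] MvPolynomial V K
  diff : (i : ℕ) →
    (Fin (rk (i + 1)) → MvPolynomial V K) →ₗ[MvPolynomial V K] (Fin (rk i) → MvPolynomial V K)
  aug_homogeneous : ∀ s : Fin (rk 0), (aug (Pi.single s 1)).IsHomogeneous (deg 0 s)
  diff_homogeneous : ∀ i (s : Fin (rk (i + 1))) (t : Fin (rk i)),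
    (diff i (Pi.single s 1) t).IsHomogeneous (deg (i + 1) s - deg i t) ∧
      (deg (i + 1) s < deg i t → diff i (Pi.single s 1) t = 0)
  range_aug : LinearMap.range aug = I
  exact_zero : LinearMap.ker aug = LinearMap.range (diff 0)
  exact_succ : ∀ i, LinearMap.ker (diff i) = LinearMap.range (diff (i + 1))

/-- The Castelnuovo–Mumford regularity of an ideal `I` of a polynomial ring: the least
`r` such that `I` admits a finite graded free resolution all of whose `i`-th twists are
at most `r + i`. -/
noncomputable def regCM {K V : Type*} [Field K] (I : Ideal (MvPolynomial V K)) : ℕ :=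
  sInf {r | ∃ F : GradedFreeResolution I, ∀ i (t : Fin (F.rk i)), F.deg i t ≤ r + i}

end


noncomputable section AuxSqfree

/-- Exponent vector of an edge. -/
def expVec {V : Type*} (e : Sym2 V) : V →₀ ℕ :=
  Sym2.lift ⟨fun a b => Finsupp.single a 1 + Finsupp.single b 1, fun a b => add_comm _ _⟩ e

lemma edgeProd_eq_monomial (K : Type*) [CommSemiring K] {V : Type*} (e : Sym2 V) :
    edgeProd K e = monomial (expVec e) (1 : K) := by
  induction e using Sym2.inductionOn with
  | hf a b => simp [edgeProd, expVec, X, monomial_mul]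

lemma prod_edgeProd (K : Type*) [CommSemiring K] {V : Type*} (M : Finset (Sym2 V)) :
    ∏ e ∈ M, edgeProd K e = monomial (∑ e ∈ M, expVec e) (1 : K) := by
  induction M using Finset.cons_induction with
  | empty => simp
  | cons e M he ih =>
      rw [Finset.prod_cons, Finset.sum_cons, ih, edgeProd_eq_monomial, monomial_mul, one_mul]

lemma single_le_expVec {V : Type*} {v : V} {e : Sym2 V} (h : v ∈ e) :
    Finsupp.single v 1 ≤ expVec e := by
  induction e using Sym2.inductionOn with
  | hf a b =>
    rw [Sym2.mem_iff] at h
    have he : expVec s(a, b) = Finsupp.single a 1 + Finsupp.single b 1 := rfl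
    rw [he]
    rcases h with rfl | rfl
    · exact le_self_add
    · exact le_add_self

lemma expVec_apply_eq_zero {V : Type*} {v : V} {e : Sym2 V} (h : v ∉ e) : expVec e v = 0 := by
  induction e using Sym2.inductionOn with
  | hf a b =>
    rw [Sym2.mem_iff, not_or] at h
    have he : expVec s(a, b) = Finsupp.single a 1 + Finsupp.single b 1 := rfl
    rw [he]
    simp [Finsupp.single_apply, Ne.symm h.1, Ne.symm h.2]

lemma matchingPow_eq_span_monomial (K : Type*) [CommSemiring K] {V : Type*}
    (H : SimpleGraph V) (k : ℕ) :
    matchingPow K H k = Ideal.span ((fun s => monomial s (1 : K)) ''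
      {s | ∃ M : Finset (Sym2 V), IsMatchingSet H M ∧ M.card = k ∧ s = ∑ e ∈ M, expVec e}) := by
  unfold matchingPow
  congr 1
  ext p
  constructor
  · rintro ⟨M, hM, hc, rfl⟩
    exact ⟨∑ e ∈ M, expVec e, ⟨M, hM, hc, rfl⟩, (prod_edgeProd K M).symm⟩
  · rintro ⟨s, ⟨M, hM, hc, rfl⟩, rfl⟩
    exact ⟨M, hM, hc, (prod_edgeProd K M).symm⟩

end AuxSqfree

/-- `((I(G)^{[k]} + ⟨xy₁,…,xyₙ⟩) : x) = I(G \ {x,y₁,…,yₙ})^{[k]} + ⟨y₁,…,yₙ⟩`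
where `N_G(x) = {y₁,…,yₙ}`. -/
theorem matchingPow_add_star_colon_vertex {K : Type*} [Field K] {V : Type*} [Fintype V]
    (G : SimpleGraph V) (x : V) (k : ℕ) (hk1 : 1 ≤ k) (hk2 : k ≤ matchingNumber G) :
    Submodule.colon
        (matchingPow K G k +
          Ideal.span ((fun y => (X x * X y : MvPolynomial V K)) '' G.neighborSet x))
        (Ideal.span {(X x : MvPolynomial V K)}) =
      matchingPow K (delVerts G (insert x (G.neighborSet x))) k +
        Ideal.span ((X : V → MvPolynomial V K) '' G.neighborSet x) := by
  classical
  set N : Set V := G.neighborSet x with hN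
  set G' : SimpleGraph V := delVerts G (insert x N) with hG'
  set S₁ : Set (V →₀ ℕ) :=
    {s | ∃ M : Finset (Sym2 V), IsMatchingSet G M ∧ M.card = k ∧ s = ∑ e ∈ M, expVec e} with hS₁
  set S₁' : Set (V →₀ ℕ) :=
    {s | ∃ M : Finset (Sym2 V), IsMatchingSet G' M ∧ M.card = k ∧ s = ∑ e ∈ M, expVec e} with hS₁'
  set S₂ : Set (V →₀ ℕ) :=
    ((fun y => Finsupp.single x 1 + Finsupp.single y 1) '' N) with hS₂
  set S₂' : Set (V →₀ ℕ) := ((fun y => Finsupp.single y 1) '' N) with hS₂'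
  have hXX : ∀ y : V, (X x * X y : MvPolynomial V K) =
      monomial (Finsupp.single x 1 + Finsupp.single y 1) 1 := by
    intro y; simp [X, monomial_mul]
  have hX1 : ∀ y : V, (X y : MvPolynomial V K) = monomial (Finsupp.single y 1) 1 := by
    intro y; simp [X]
  have him2 : (fun y => (X x * X y : MvPolynomial V K)) '' N =
      (fun s => monomial s (1 : K)) '' S₂ := by
    rw [hS₂, Set.image_image]
    exact Set.image_congr fun y _ => hXX y
  have him2' : (X : V → MvPolynomial V K) '' N = (fun s => monomial s (1 : K)) '' S₂' := by
    rw [hS₂', Set.image_image]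
    exact Set.image_congr fun y _ => hX1 y
  have hLHS : matchingPow K G k +
      Ideal.span ((fun y => (X x * X y : MvPolynomial V K)) '' N) =
      Ideal.span ((fun s => monomial s (1 : K)) '' (S₁ ∪ S₂)) := by
    rw [Set.image_union, Ideal.span_union, matchingPow_eq_span_monomial, him2]
    rfl
  have hRHS : matchingPow K G' k +
      Ideal.span ((X : V → MvPolynomial V K) '' N) =
      Ideal.span ((fun s => monomial s (1 : K)) '' (S₁' ∪ S₂')) := by
    rw [Set.image_union, Ideal.span_union, matchingPow_eq_span_monomial, him2']
    rfl
  rw [hLHS, hRHS]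
  ext p
  rw [show (Ideal.span {(X x : MvPolynomial V K)}) =
      Submodule.span (MvPolynomial V K) {(X x : MvPolynomial V K)} from rfl,
    Submodule.mem_colon_span_singleton, smul_eq_mul,
    mem_ideal_span_monomial_image, mem_ideal_span_monomial_image, support_mul_X]
  constructor
  · -- hard direction
    intro H m hm
    have hd := H (m + Finsupp.single x 1)
      (Finset.mem_map.2 ⟨m, hm, rfl⟩)
    obtain ⟨s, hs, hsle⟩ := hd
    -- helper: if some y ∈ N has 1 ≤ s y, and y ≠ x, then we're done via S₂'
    have key : ∀ y ∈ N, Finsupp.single y 1 ≤ s → ∃ s' ∈ S₁' ∪ S₂', s' ≤ m := by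
      intro y hy hys
      have hadj : G.Adj x y := hy
      have hyx : y ≠ x := fun h => G.irrefl (h ▸ hadj)
      refine ⟨Finsupp.single y 1, Or.inr ⟨y, hy, rfl⟩, ?_⟩
      rw [Finsupp.single_le_iff]
      have h1 : (1 : ℕ) ≤ s y := Finsupp.single_le_iff.mp hys
      have h2 : s y ≤ m y + (Finsupp.single x 1 : V →₀ ℕ) y := hsle y
      rw [Finsupp.single_apply, if_neg (fun h => hyx h.symm), add_zero] at h2
      exact le_trans h1 h2
    rcases hs with hs | hs
    · -- s comes from a k-matching M of G
      obtain ⟨M, hM, hMc, rfl⟩ := hs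
      by_cases hmeet : ∃ e ∈ M, ∃ v, v ∈ e ∧ v ∈ insert x N
      · -- M meets the closed neighborhood of x; find a neighbor y covered by M
        obtain ⟨e, heM, v, hve, hvN⟩ := hmeet
        have hedge : e ∈ G.edgeSet := hM.1 heM
        obtain ⟨y, hy, hye⟩ : ∃ y, y ∈ N ∧ y ∈ e := by
          rcases hvN with rfl | hvN
          · -- v = x : the other endpoint of e is a neighbor of x
            induction e using Sym2.inductionOn with
            | hf a b =>
              rw [Sym2.mem_iff] at hve
              rw [SimpleGraph.mem_edgeSet] at hedge
              rcases hve with rfl | rfl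
              · exact ⟨b, hedge, Sym2.mem_mk_right _ _⟩
              · exact ⟨a, hedge.symm, Sym2.mem_mk_left _ _⟩
          · exact ⟨v, hvN, hve⟩
        exact key y hy (le_trans (single_le_expVec hye)
          (Finset.single_le_sum (f := fun e => expVec e) (fun i _ => zero_le) heM))
      · -- M avoids the closed neighborhood: M is a matching of G'
        push_neg at hmeet
        refine ⟨∑ e ∈ M, expVec e, Or.inl ⟨M, ⟨?_, hM.2⟩, hMc, rfl⟩, ?_⟩
        · intro e heM
          have hedge := hM.1 heM
          induction e using Sym2.inductionOn with
          | hf a b =>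
            rw [SimpleGraph.mem_edgeSet] at hedge ⊢
            exact ⟨hedge, hmeet _ heM a (Sym2.mem_mk_left _ _),
              hmeet _ heM b (Sym2.mem_mk_right _ _)⟩
        · intro v
          by_cases hvx : v = x
          · subst hvx
            have : (∑ e ∈ M, expVec e) v = ∑ e ∈ M, expVec e v := Finsupp.finset_sum_apply _ _ _
            rw [this, Finset.sum_eq_zero]
            · exact zero_le
            · intro e heM
              exact expVec_apply_eq_zero (fun hve => hmeet e heM v hve (Set.mem_insert _ _))
          · have h2 : (∑ e ∈ M, expVec e) v ≤ m v + (Finsupp.single x 1 : V →₀ ℕ) v := hsle v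
            rwa [Finsupp.single_apply, if_neg (fun h => hvx h.symm), add_zero] at h2
    · -- s = single x 1 + single y 1 with y ∈ N
      obtain ⟨y, hy, rfl⟩ := hs
      exact key y hy le_add_self
  · -- easy direction
    intro H d hd
    obtain ⟨m, hm, rfl⟩ := Finset.mem_map.1 hd
    obtain ⟨s', hs', hs'le⟩ := H m hm
    rcases hs' with hs' | hs'
    · -- matching of G' is a matching of G
      obtain ⟨M, hM, hMc, rfl⟩ := hs'
      refine ⟨∑ e ∈ M, expVec e, Or.inl ⟨M, ⟨?_, hM.2⟩, hMc, rfl⟩,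
        le_trans hs'le le_self_add⟩
      intro e heM
      have hedge := hM.1 heM
      induction e using Sym2.inductionOn with
      | hf a b =>
        rw [SimpleGraph.mem_edgeSet] at hedge ⊢
        exact hedge.1
    · obtain ⟨y, hy, rfl⟩ := hs'
      refine ⟨Finsupp.single x 1 + Finsupp.single y 1, Or.inr ⟨y, hy, rfl⟩, ?_⟩
      have hemb : ((addRightEmbedding (Finsupp.single x 1 : V →₀ ℕ)) m)
          = m + Finsupp.single x 1 := rfl
      rw [hemb, add_comm m]
      exact add_le_add le_rfl hs'le
end

section
/- Let G = W(T_m) be a Cohen-Macaulay forest, i.e., the whisker graph on a forest T_m with m vertices. Then for every subset S ⊆ V(G) with |S| = m - k, the prime ideal ⟨S⟩ does not contain I(G)^{[k]}; consequently, height(I(G)^{[k]}) ≥ m - k + 1 and dim(R/I(G)^{[k]}) ≤ m + k - 1. -/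
open MvPolynomial

/-! ### Auxiliary results -/

noncomputable section AuxProof

open MvPolynomial

/-- Transfer of algebraic independence along an algebra equivalence. -/
private lemma aux_indep_algEquivComp {K A B ι : Type*} [Field K] [CommRing A] [CommRing B]
    [Algebra K A] [Algebra K B] {v : ι → A} (e : A ≃ₐ[K] B)
    (h : AlgebraicIndependent K v) : AlgebraicIndependent K (fun i => e (v i)) := by
  have := h.ringHom_of_comp_eq (RingHom.id K) e Function.surjective_id e.injective
    (by ext x; simp)
  exact this

/-- Key counting fact: there is no algebraically independent family in a polynomial
ring over a field whose index type is larger than the number of variables. -/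
private lemma aux_card_le_of_algIndep {K : Type*} [Field K] {σ ι : Type*} [Fintype σ] [Fintype ι]
    {f : ι → MvPolynomial σ K} (hf : AlgebraicIndependent K f) :
    Fintype.card ι ≤ Fintype.card σ := by
  classical
  by_contra hlt
  push_neg at hlt
  set n := Fintype.card σ with hn
  set m := Fintype.card ι with hm
  set d := Finset.univ.sup (fun i => (f i).totalDegree) + 1 with hd
  have hd1 : 1 ≤ d := Nat.le_add_left 1 _
  have hdeg : ∀ i, (f i).totalDegree ≤ d := by
    intro i
    have h1 : (f i).totalDegree ≤ Finset.univ.sup (fun j => (f j).totalDegree) :=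
      Finset.le_sup (f := fun j => (f j).totalDegree) (Finset.mem_univ i)
    omega
  set c := m * d + 1 with hc
  set s := c ^ n + 1 with hs
  have hs1 : 1 ≤ s := Nat.le_add_left 1 _
  set N := m * (s * d) with hN
  set g : (ι → Fin (s + 1)) → (ι →₀ ℕ) :=
    fun a => Finsupp.equivFunOnFinite.symm (fun i => (a i : ℕ)) with hg
  have hga : ∀ a i, g a i = (a i : ℕ) := fun a i => rfl
  have hginj : Function.Injective g := by
    intro a b hab
    have h2 : (fun i => ((a i : ℕ))) = fun i => ((b i : ℕ)) :=
      Finsupp.equivFunOnFinite.symm.injective hab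
    funext i
    exact Fin.val_injective (congrFun h2 i)
  -- linear independence of the monomials in the `f i`
  have hFlin : LinearIndependent K (fun a : ι → Fin (s+1) => (aeval f) (monomial (g a) (1:K))) := by
    have h1 : LinearIndependent K (fun u : ι →₀ ℕ => (monomial u (1:K) : MvPolynomial ι K)) := by
      have := (basisMonomials ι K).linearIndependent
      rwa [coe_basisMonomials] at this
    have h2 := h1.comp g hginj
    have h3 := h2.map' (aeval f).toLinearMap (LinearMap.ker_eq_bot.mpr hf)
    exact h3
  -- the big span of monomials of degree ≤ N
  set B' : Finset (σ →₀ ℕ) := Finset.univ.image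
    (fun a : σ → Fin (N+1) => Finsupp.equivFunOnFinite.symm (fun i => (a i : ℕ))) with hB'
  set fs : Finset (MvPolynomial σ K) := B'.image (fun u => monomial u (1:K)) with hfs
  set W : Submodule K (MvPolynomial σ K) := Submodule.span K (fs : Set (MvPolynomial σ K)) with hW
  have hmemW : ∀ p : MvPolynomial σ K, p.totalDegree ≤ N → p ∈ W := by
    intro p hp
    rw [p.as_sum]
    refine Submodule.sum_mem _ (fun u hu => ?_)
    have hcoef : (monomial u) (coeff u p) = (coeff u p) • ((monomial u) (1:K)) := by
      rw [MvPolynomial.smul_monomial, smul_eq_mul, mul_one]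
    rw [hcoef]
    refine Submodule.smul_mem _ _ (Submodule.subset_span ?_)
    refine Finset.mem_coe.mpr (Finset.mem_image.mpr ⟨u, ?_, rfl⟩)
    have hub : ∀ i, u i ≤ N := by
      intro i
      have h1 : u i ≤ ∑ j ∈ u.support, u j := by
        by_cases h : u i = 0
        · rw [h]; exact Nat.zero_le _
        · exact Finset.single_le_sum (f := fun j => u j) (fun j _ => Nat.zero_le _)
            (Finsupp.mem_support_iff.mpr h)
      have h2 : (u.sum fun _ e => e) ≤ p.totalDegree := MvPolynomial.le_totalDegree hu
      have h3 : (u.sum fun _ e => e) = ∑ j ∈ u.support, u j := rfl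
      omega
    refine Finset.mem_image.mpr ⟨fun i => ⟨u i, by have := hub i; omega⟩, Finset.mem_univ _, ?_⟩
    ext i
    simp
  have hdegF : ∀ a : ι → Fin (s+1), ((aeval f) (monomial (g a) (1:K))).totalDegree ≤ N := by
    intro a
    rw [aeval_monomial, map_one, one_mul]
    have h0 : ((g a).prod fun i k => f i ^ k) = ∏ i ∈ (g a).support, f i ^ (g a i) := rfl
    rw [h0]
    calc (∏ i ∈ (g a).support, f i ^ (g a i)).totalDegree
        ≤ ∑ i ∈ (g a).support, (f i ^ (g a i)).totalDegree := totalDegree_finset_prod _ _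
      _ ≤ ∑ _i ∈ (g a).support, s * d := Finset.sum_le_sum (fun i _ => by
            refine le_trans (totalDegree_pow _ _) (Nat.mul_le_mul ?_ (hdeg i))
            rw [hga]; exact Fin.is_le _)
      _ ≤ ∑ _i ∈ (Finset.univ : Finset ι), s * d :=
            Finset.sum_le_sum_of_subset (Finset.subset_univ _)
      _ = m * (s * d) := by rw [Finset.sum_const, smul_eq_mul, Finset.card_univ]
  -- pack the family into `W`
  set FF : (ι → Fin (s+1)) → W := fun a => ⟨_, hmemW _ (hdegF a)⟩ with hFF
  have hFFlin : LinearIndependent K FF := by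
    apply LinearIndependent.of_comp W.subtype
    exact hFlin
  have hcard1 : Fintype.card (ι → Fin (s+1)) ≤ Module.finrank K W :=
    hFFlin.fintype_card_le_finrank
  have hcard2 : Module.finrank K W ≤ fs.card := finrank_span_finset_le_card fs
  have e1 : Fintype.card (ι → Fin (s+1)) = (s+1)^m := by
    rw [Fintype.card_fun, Fintype.card_fin]
  have e2 : fs.card ≤ (N+1)^n := by
    calc fs.card ≤ B'.card := Finset.card_image_le
      _ ≤ (Finset.univ : Finset (σ → Fin (N+1))).card := Finset.card_image_le
      _ = (N+1)^n := by rw [Finset.card_univ, Fintype.card_fun, Fintype.card_fin]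
  have hcard3 : (s+1)^m ≤ (N+1)^n := by
    rw [← e1]
    exact le_trans hcard1 (le_trans hcard2 e2)
  -- numerical contradiction
  have h1 : N + 1 ≤ s * c := by
    have h1a : m * (s*d) + 1 ≤ m*(s*d) + s := by omega
    calc N + 1 ≤ m*(s*d) + s := h1a
      _ = s * (m*d+1) := by ring
      _ = s * c := by rw [hc]
  have h2 : (N+1)^n ≤ (s*c)^n := Nat.pow_le_pow_left h1 n
  have h3 : (s*c)^n = s^n * c^n := mul_pow s c n
  have h4 : s^n * c^n < s^n * s := by
    have hpos : 0 < s ^ n := pow_pos (by omega) n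
    have hcs : c^n < s := by omega
    exact mul_lt_mul_of_pos_left hcs hpos
  have h5 : s^(n+1) = s^n * s := pow_succ s n
  have h6 : s^(n+1) ≤ s^m := Nat.pow_le_pow_right (by omega) (by omega)
  have h7 : s^m ≤ (s+1)^m := Nat.pow_le_pow_left (by omega) m
  linarith

/-- Lifting an algebraically independent family through a quotient by a nonzero prime,
gaining one extra transcendental element. -/
private lemma aux_lift {K B : Type*} [Field K] [CommRing B] [IsDomain B] [Algebra K B]
    {r : Ideal B} {t : B} (ht : t ∈ r) (ht0 : t ≠ 0) {ι : Type*} {v : ι → B}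
    (hv : AlgebraicIndependent K (fun i => Ideal.Quotient.mk r (v i))) :
    AlgebraicIndependent K (fun o : Option ι => o.elim t v) := by
  have hv' := algebraicIndependent_iff.mp hv
  set Φ : Polynomial (MvPolynomial ι K) →ₐ[K] B := Polynomial.aevalTower (aeval v) t with hΦ
  have mkaeval : ∀ p : MvPolynomial ι K,
      Ideal.Quotient.mk r ((aeval v) p) = (aeval fun i => Ideal.Quotient.mk r (v i)) p := by
    intro p
    have h1 : (Ideal.Quotient.mkₐ K r).comp (aeval v)
        = (aeval fun i => Ideal.Quotient.mk r (v i)) :=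
      algHom_ext (fun i => by simp [Ideal.Quotient.mkₐ_eq_mk])
    calc Ideal.Quotient.mk r ((aeval v) p)
        = ((Ideal.Quotient.mkₐ K r).comp (aeval v)) p := rfl
      _ = _ := by rw [h1]
  have key : ∀ (n : ℕ) (q : Polynomial (MvPolynomial ι K)), q.natDegree ≤ n → Φ q = 0 → q = 0 := by
    intro n
    induction n with
    | zero =>
      intro q hdeg hq
      have hqC : q = Polynomial.C (q.coeff 0) := Polynomial.eq_C_of_natDegree_le_zero hdeg
      rw [hqC] at hq ⊢
      rw [hΦ, Polynomial.aevalTower_C] at hq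
      have h0 : (aeval fun i => Ideal.Quotient.mk r (v i)) (q.coeff 0) = 0 := by
        rw [← mkaeval, hq, map_zero]
      rw [hv' _ h0, map_zero]
    | succ n IH =>
      intro q hdeg hq
      have hsplit : Polynomial.X * q.divX + Polynomial.C (q.coeff 0) = q :=
        Polynomial.X_mul_divX_add q
      have hq' : t * Φ q.divX + (aeval v) (q.coeff 0) = 0 := by
        rw [← hq]
        conv_rhs => rw [← hsplit]
        rw [map_add, map_mul, hΦ, Polynomial.aevalTower_X, Polynomial.aevalTower_C]
      have hmem : (aeval v) (q.coeff 0) ∈ r := by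
        have hneg : (aeval v) (q.coeff 0) = -(t * Φ q.divX) :=
          eq_neg_of_add_eq_zero_right hq'
        rw [hneg]
        exact neg_mem (Ideal.mul_mem_right _ _ ht)
      have hc0 : q.coeff 0 = 0 := by
        apply hv'
        rw [← mkaeval]
        exact Ideal.Quotient.eq_zero_iff_mem.mpr hmem
      have hΦdiv : Φ q.divX = 0 := by
        have hz : t * Φ q.divX = 0 := by
          have := hq'
          rw [hc0, map_zero, add_zero] at this
          exact this
        rcases mul_eq_zero.mp hz with h | h
        · exact absurd h ht0
        · exact h
      have hdiv0 : q.divX = 0 := by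
        refine IH q.divX ?_ hΦdiv
        have := Polynomial.natDegree_divX_eq_natDegree_tsub_one (p := q)
        omega
      have hqX : q = Polynomial.C (q.coeff 0) + Polynomial.X * q.divX := by
        rw [add_comm, hsplit]
      rw [hqX, hc0, hdiv0, mul_zero, add_zero, map_zero]
  rw [algebraicIndependent_iff]
  intro P hP
  have hcomp : Φ.comp (optionEquivLeft K ι).toAlgHom
      = aeval (fun o : Option ι => o.elim t v) := by
    apply algHom_ext
    rintro (_ | i)
    · rw [AlgHom.comp_apply]
      show Φ ((optionEquivLeft K ι) (X none)) = _
      rw [optionEquivLeft_X_none, hΦ, Polynomial.aevalTower_X, aeval_X]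
      rfl
    · rw [AlgHom.comp_apply]
      show Φ ((optionEquivLeft K ι) (X (some i))) = _
      rw [optionEquivLeft_X_some, hΦ, Polynomial.aevalTower_C, aeval_X, aeval_X]
      rfl
  have hP' : Φ ((optionEquivLeft K ι) P) = 0 := by
    have hcalc : Φ ((optionEquivLeft K ι) P) = (Φ.comp (optionEquivLeft K ι).toAlgHom) P := rfl
    rw [hcalc, hcomp, hP]
  have hzero := key _ _ le_rfl hP'
  exact (optionEquivLeft K ι).injective (by rw [hzero, map_zero])

/-- From a chain of primes of length `l`, an algebraically independent family of
size `l` in the quotient by the smallest prime of the chain. -/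
private lemma aux_chain_indep {K A : Type*} [Field K] [CommRing A] [Algebra K A] :
    ∀ (l : ℕ) (c : LTSeries (PrimeSpectrum A)), c.length = l →
      ∃ g : Fin l → (A ⧸ c.head.asIdeal), AlgebraicIndependent K g := by
  intro l
  induction l with
  | zero =>
    intro c _
    haveI : c.head.asIdeal.IsPrime := c.head.2
    haveI : IsDomain (A ⧸ c.head.asIdeal) := Ideal.Quotient.isDomain _
    exact ⟨Fin.elim0, algebraicIndependent_empty_type⟩
  | succ l IH =>
    intro c hc
    haveI hp0 : c.head.asIdeal.IsPrime := c.head.2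
    haveI : IsDomain (A ⧸ c.head.asIdeal) := Ideal.Quotient.isDomain _
    have hne : c.length ≠ 0 := by omega
    obtain ⟨g0, hg0⟩ := IH (c.tail hne) (by rw [RelSeries.tail_length, hc]; omega)
    haveI hp1 : (c 1).asIdeal.IsPrime := (c 1).2
    have e1 : (c.tail hne).head = c 1 := RelSeries.head_tail c hne
    have hlt : c.head.asIdeal < (c 1).asIdeal := by
      rw [PrimeSpectrum.asIdeal_lt_asIdeal]
      have hstep := c.step ⟨0, by omega⟩
      have h0 : (⟨0, by omega⟩ : Fin c.length).castSucc = (0 : Fin (c.length+1)) := by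
        ext; simp
      have h1' : (⟨0, by omega⟩ : Fin c.length).succ = (1 : Fin (c.length+1)) := by
        ext
        rw [Fin.val_succ, Fin.val_one', Nat.mod_eq_of_lt (by omega)]
      rw [h0, h1'] at hstep
      exact hstep
    obtain ⟨t0, ht0m, ht0n⟩ := SetLike.exists_of_lt hlt
    have eqI : (c.tail hne).head.asIdeal = (c 1).asIdeal := by rw [e1]
    have hg1 : AlgebraicIndependent K (fun i => (Ideal.quotientEquivAlgOfEq K eqI) (g0 i)) :=
      aux_indep_algEquivComp _ hg0
    haveI hrP : (Ideal.map (Ideal.Quotient.mkₐ K c.head.asIdeal) (c 1).asIdeal).IsPrime :=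
      Ideal.map_isPrime_of_surjective (Ideal.Quotient.mkₐ_surjective K _)
        (by intro x hx
            have hx' : Ideal.Quotient.mkₐ K c.head.asIdeal x = 0 := RingHom.mem_ker.mp hx
            rw [Ideal.Quotient.mkₐ_eq_mk, Ideal.Quotient.eq_zero_iff_mem] at hx'
            exact hlt.le hx')
    have hg2 : AlgebraicIndependent K
        (fun i => (DoubleQuot.quotQuotEquivQuotOfLEₐ K hlt.le).symm
          ((Ideal.quotientEquivAlgOfEq K eqI) (g0 i))) :=
      aux_indep_algEquivComp _ hg1
    choose v hvs using fun i => Ideal.Quotient.mk_surjective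
      (I := Ideal.map (Ideal.Quotient.mkₐ K c.head.asIdeal) (c 1).asIdeal)
      ((DoubleQuot.quotQuotEquivQuotOfLEₐ K hlt.le).symm
        ((Ideal.quotientEquivAlgOfEq K eqI) (g0 i)))
    have hv : AlgebraicIndependent K (fun i => Ideal.Quotient.mk
        (Ideal.map (Ideal.Quotient.mkₐ K c.head.asIdeal) (c 1).asIdeal) (v i)) := by
      have hfun : (fun i => Ideal.Quotient.mk
          (Ideal.map (Ideal.Quotient.mkₐ K c.head.asIdeal) (c 1).asIdeal) (v i))
          = fun i => (DoubleQuot.quotQuotEquivQuotOfLEₐ K hlt.le).symm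
            ((Ideal.quotientEquivAlgOfEq K eqI) (g0 i)) := funext hvs
      rw [hfun]
      exact hg2
    have htm : Ideal.Quotient.mk c.head.asIdeal t0
        ∈ Ideal.map (Ideal.Quotient.mkₐ K c.head.asIdeal) (c 1).asIdeal := by
      have hmm : Ideal.Quotient.mkₐ K c.head.asIdeal t0
          ∈ Ideal.map (Ideal.Quotient.mkₐ K c.head.asIdeal) (c 1).asIdeal :=
        Ideal.mem_map_of_mem _ ht0m
      simpa [Ideal.Quotient.mkₐ_eq_mk] using hmm
    have htn : Ideal.Quotient.mk c.head.asIdeal t0 ≠ 0 := by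
      rw [Ne, Ideal.Quotient.eq_zero_iff_mem]; exact ht0n
    have hopt := aux_lift htm htn hv
    exact ⟨_, (algebraicIndependent_equiv (finSuccEquiv l)).mpr hopt⟩

/-- Chains of primes in a polynomial ring over a field are no longer than the
number of variables. -/
private lemma aux_ltSeries_le_card {K σ : Type*} [Field K] [Fintype σ]
    (c : LTSeries (PrimeSpectrum (MvPolynomial σ K))) : c.length ≤ Fintype.card σ := by
  obtain ⟨g, hg⟩ := aux_chain_indep (K := K) c.length c rfl
  choose v hvs using fun i => Ideal.Quotient.mk_surjective (I := c.head.asIdeal) (g i)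
  have hv : AlgebraicIndependent K v := by
    apply AlgebraicIndependent.of_ringHom_of_comp_eq (RingHom.id K)
      (Ideal.Quotient.mk c.head.asIdeal)
    · show AlgebraicIndependent K (⇑(Ideal.Quotient.mk c.head.asIdeal) ∘ v)
      have hfun : (⇑(Ideal.Quotient.mk c.head.asIdeal) ∘ v) = g := funext hvs
      rw [hfun]; exact hg
    · exact fun a b h => h
    · ext x
      have h1 := (Ideal.Quotient.mkₐ K c.head.asIdeal).commutes x
      rw [Ideal.Quotient.mkₐ_eq_mk] at h1
      simpa [RingHom.comp_apply, MvPolynomial.algebraMap_eq] using h1.symm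
  have hle := aux_card_le_of_algIndep (K := K) hv
  simpa using hle

/-- Product of variables as a monomial. -/
private lemma aux_prod_X_eq_monomial {K σ : Type*} [CommSemiring K] (D : Finset σ) :
    (∏ v ∈ D, (X v : MvPolynomial σ K)) = monomial (∑ v ∈ D, Finsupp.single v 1) (1:K) := by
  classical
  induction D using Finset.induction_on with
  | empty => simp
  | @insert a s h IH =>
    rw [Finset.prod_insert h, Finset.sum_insert h, IH]
    have hX : (X a : MvPolynomial σ K) = monomial (Finsupp.single a 1) (1:K) := rfl
    rw [hX, monomial_mul, one_mul]

/-- A product of variables avoiding `S` is not in the prime generated by `S`. -/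
private lemma aux_not_mem_span {K σ : Type*} [Field K] {D S : Finset σ}
    (h : ∀ v ∈ D, v ∉ S) :
    (∏ v ∈ D, (X v : MvPolynomial σ K)) ∉
      Ideal.span ((X : σ → MvPolynomial σ K) '' ↑S) := by
  classical
  rw [aux_prod_X_eq_monomial, mem_ideal_span_X_image]
  push_neg
  refine ⟨∑ v ∈ D, Finsupp.single v 1, ?_, ?_⟩
  · rw [support_monomial]
    simp
  · intro i hiS
    have hiD : i ∉ D := fun hiD => h i hiD hiS
    rw [Finsupp.finset_sum_apply]
    refine Finset.sum_eq_zero (fun v hv => ?_)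
    exact Finsupp.single_eq_of_ne (fun hvi => hiD (hvi ▸ hv))

/-- The ideal generated by a set of variables is prime. -/
private lemma aux_span_X_isPrime {K σ : Type*} [Field K] (S : Finset σ) :
    (Ideal.span ((X : σ → MvPolynomial σ K) '' ↑S)).IsPrime := by
  classical
  set I := Ideal.span ((X : σ → MvPolynomial σ K) '' (↑S : Set σ)) with hI
  set φ : MvPolynomial σ K →ₐ[K] MvPolynomial σ K :=
    aeval (fun v => if v ∈ S then 0 else X v) with hφ
  have hIker : I = RingHom.ker φ := by
    apply le_antisymm
    · rw [hI, Ideal.span_le]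
      rintro _ ⟨w, hw, rfl⟩
      have hφw : φ (X w) = 0 := by
        rw [hφ, aeval_X, if_pos (Finset.mem_coe.mp hw)]
      exact RingHom.mem_ker.mpr hφw
    · intro p hp
      have hmk : (Ideal.Quotient.mkₐ K I).comp φ = Ideal.Quotient.mkₐ K I := by
        apply algHom_ext
        intro w
        rw [AlgHom.comp_apply, hφ, aeval_X]
        by_cases hw : w ∈ S
        · rw [if_pos hw, map_zero, eq_comm, Ideal.Quotient.mkₐ_eq_mk,
            Ideal.Quotient.eq_zero_iff_mem]
          exact Ideal.subset_span ⟨w, hw, rfl⟩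
        · rw [if_neg hw]
      have h1 : Ideal.Quotient.mk I (φ p) = Ideal.Quotient.mk I p := by
        have h2 := congrFun (congrArg (fun (f : MvPolynomial σ K →ₐ[K] MvPolynomial σ K ⧸ I)
          => (f : MvPolynomial σ K → MvPolynomial σ K ⧸ I)) hmk) p
        simpa [Ideal.Quotient.mkₐ_eq_mk] using h2
      have hp0 : φ p = 0 := RingHom.mem_ker.mp hp
      rw [← Ideal.Quotient.eq_zero_iff_mem, ← h1, hp0, map_zero]
  rw [hIker]
  exact RingHom.ker_isPrime φ

private lemma aux_span_X_lt {K σ : Type*} [Field K] {Sa Sb : Finset σ} (hsub : Sa ⊆ Sb)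
    {b : σ} (hb : b ∈ Sb) (hbn : b ∉ Sa) :
    Ideal.span ((X : σ → MvPolynomial σ K) '' ↑Sa)
      < Ideal.span ((X : σ → MvPolynomial σ K) '' ↑Sb) := by
  refine lt_of_le_not_ge
    (Ideal.span_mono (Set.image_mono (Finset.coe_subset.mpr hsub))) ?_
  intro hle
  have hXb : (X b : MvPolynomial σ K) ∈ Ideal.span ((X : σ → MvPolynomial σ K) '' ↑Sb) :=
    Ideal.subset_span ⟨b, hb, rfl⟩
  have hmem := hle hXb
  have hnot := aux_not_mem_span (K := K) (D := ({b} : Finset σ)) (S := Sa)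
    (by intro v hv; rw [Finset.mem_singleton] at hv; rwa [hv])
  rw [Finset.prod_singleton] at hnot
  exact hnot hmem

/-- Existence of a chain of monomial primes of length `card S` ending at `⟨X v : v ∈ S⟩`. -/
private lemma aux_exists_chain {K σ : Type*} [Field K] [DecidableEq σ] :
    ∀ (t : ℕ) (S : Finset σ), S.card = t →
      ∃ c : LTSeries (PrimeSpectrum (MvPolynomial σ K)), c.length = t ∧
        c.last.asIdeal = Ideal.span ((X : σ → MvPolynomial σ K) '' ↑S) := by
  intro t
  induction t with
  | zero =>
    intro S hS
    exact ⟨RelSeries.singleton _ ⟨Ideal.span ((X : σ → MvPolynomial σ K) '' ↑S),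
      aux_span_X_isPrime S⟩, rfl, rfl⟩
  | succ t IH =>
    intro S hS
    have hne : S.Nonempty := Finset.card_pos.mp (by omega)
    obtain ⟨b, hb⟩ := hne
    obtain ⟨c, hlen, hlast⟩ := IH (S.erase b) (by rw [Finset.card_erase_of_mem hb]; omega)
    refine ⟨c.snoc ⟨Ideal.span ((X : σ → MvPolynomial σ K) '' ↑S), aux_span_X_isPrime S⟩ ?_,
      ?_, ?_⟩
    · show RelSeries.last c < _
      rw [← PrimeSpectrum.asIdeal_lt_asIdeal, hlast]
      exact aux_span_X_lt (Finset.erase_subset _ _) hb (Finset.notMem_erase _ _)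
    · rw [RelSeries.snoc_length, hlen]
    · rw [RelSeries.last_snoc]

/-- The combinatorial heart: any set of at most `m - k` vertices of `W(T)` misses some
`k`-matching consisting of whisker edges. -/
private lemma aux_matching {K : Type*} [Field K] {V : Type*} [Fintype V] [DecidableEq V]
    (T : SimpleGraph V) {m k : ℕ} (hm : Fintype.card V = m) (hk2 : k ≤ m)
    (S : Finset (V ⊕ V)) (hS : S.card ≤ m - k) :
    ∃ (M : Finset (Sym2 (V ⊕ V))) (D : Finset (V ⊕ V)),
      IsMatchingSet (whiskerGraph T) M ∧ M.card = k ∧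
      (∏ e ∈ M, edgeProd K e) = ∏ v ∈ D, (X v : MvPolynomial (V ⊕ V) K) ∧
      ∀ v ∈ D, v ∉ S := by
  classical
  set Bad : Finset V := S.image (Sum.elim id id) with hBad
  have hBadcard : Bad.card ≤ m - k := le_trans Finset.card_image_le hS
  have hAvail : k ≤ Badᶜ.card := by
    rw [Finset.card_compl, hm]; omega
  obtain ⟨A, hA, hAcard⟩ := Finset.exists_subset_card_eq hAvail
  have hAnot : ∀ x ∈ A, Sum.inl x ∉ S ∧ Sum.inr x ∉ S := by
    intro x hx
    have hxB : x ∉ Bad := by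
      have := hA hx
      simpa [Finset.mem_compl] using this
    constructor
    · intro hmem; exact hxB (Finset.mem_image.mpr ⟨Sum.inl x, hmem, rfl⟩)
    · intro hmem; exact hxB (Finset.mem_image.mpr ⟨Sum.inr x, hmem, rfl⟩)
  set ed : V → Sym2 (V ⊕ V) := fun x => s(Sum.inl x, Sum.inr x) with hed
  have hedinj : Function.Injective ed := by
    intro x y hxy
    rw [hed, Sym2.eq_iff] at hxy
    rcases hxy with ⟨h1, _⟩ | ⟨h1, _⟩
    · exact Sum.inl.inj h1
    · exact absurd h1 (by simp)
  have hinl : Function.Injective (Sum.inl : V → V ⊕ V) := Sum.inl_injective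
  have hinr : Function.Injective (Sum.inr : V → V ⊕ V) := Sum.inr_injective
  have hdisj : Disjoint (A.image Sum.inl) (A.image Sum.inr) := by
    rw [Finset.disjoint_left]
    intro a ha hb
    rw [Finset.mem_image] at ha hb
    obtain ⟨x, _, rfl⟩ := ha
    obtain ⟨y, _, hy⟩ := hb
    exact absurd hy (by simp)
  refine ⟨A.image ed, (A.image Sum.inl) ∪ (A.image Sum.inr), ⟨?_, ?_⟩, ?_, ?_, ?_⟩
  · intro e he
    rw [Finset.mem_coe, Finset.mem_image] at he
    obtain ⟨x, hx, rfl⟩ := he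
    rw [hed, SimpleGraph.mem_edgeSet]
    show (whiskerGraph T).Adj (Sum.inl x) (Sum.inr x)
    rw [whiskerGraph, SimpleGraph.fromRel_adj]
    exact ⟨by simp, Or.inl (Or.inr ⟨x, rfl, rfl⟩)⟩
  · intro e he f hf hef w hwe hwf
    rw [Finset.mem_coe, Finset.mem_image] at he hf
    obtain ⟨x, hx, rfl⟩ := he
    obtain ⟨y, hy, rfl⟩ := hf
    have hxy : x ≠ y := fun h => hef (by rw [h])
    rw [hed, Sym2.mem_iff] at hwe hwf
    rcases hwe with rfl | rfl <;> rcases hwf with h | h <;> simp_all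
  · rw [Finset.card_image_of_injective _ hedinj, hAcard]
  · rw [Finset.prod_image (fun x _ y _ h => hedinj h)]
    have hterm : ∀ x ∈ A, edgeProd K (ed x)
        = X (Sum.inl x) * X (Sum.inr x : V ⊕ V) := by
      intro x _
      rw [hed, edgeProd, Sym2.lift_mk]
    rw [Finset.prod_congr rfl hterm, Finset.prod_mul_distrib,
      Finset.prod_union hdisj,
      Finset.prod_image (fun x _ y _ h => hinl h),
      Finset.prod_image (fun x _ y _ h => hinr h)]
  · intro w hw
    rw [Finset.mem_union] at hw
    rcases hw with hw | hw <;> rw [Finset.mem_image] at hw <;> obtain ⟨x, hx, rfl⟩ := hw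
    · exact (hAnot x hx).1
    · exact (hAnot x hx).2

/-- Any prime containing the `k`-th squarefree power contains at least `m - k + 1`
variables. -/
private lemma aux_prime_vars {K : Type*} [Field K] {V : Type*} [Fintype V] [DecidableEq V]
    (T : SimpleGraph V) {m k : ℕ} (hm : Fintype.card V = m) (hk2 : k ≤ m)
    (P : Ideal (MvPolynomial (V ⊕ V) K)) [hPp : P.IsPrime]
    (hP : matchingPow K (whiskerGraph T) k ≤ P) :
    ∃ S : Finset (V ⊕ V), S.card = m - k + 1 ∧
      ∀ v ∈ S, (X v : MvPolynomial (V ⊕ V) K) ∈ P := by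
  classical
  set Sp : Finset (V ⊕ V) := Finset.univ.filter (fun v => X v ∈ P) with hSp
  have hcard : m - k + 1 ≤ Sp.card := by
    by_contra hcon
    push_neg at hcon
    obtain ⟨M, D, hMm, hMc, hprod, hD⟩ := aux_matching (K := K) T hm hk2 Sp (by omega)
    have hgen : (∏ e ∈ M, edgeProd K e) ∈ matchingPow K (whiskerGraph T) k :=
      Ideal.subset_span ⟨M, hMm, hMc, rfl⟩
    have hmemP : (∏ v ∈ D, (X v : MvPolynomial (V ⊕ V) K)) ∈ P := by
      rw [← hprod]; exact hP hgen
    obtain ⟨w, hwD, hwP⟩ := Ideal.IsPrime.prod_mem_iff.mp hmemP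
    exact hD w hwD (Finset.mem_filter.mpr ⟨Finset.mem_univ _, hwP⟩)
  obtain ⟨S, hSsub, hScard⟩ := Finset.exists_subset_card_eq hcard
  exact ⟨S, hScard, fun w hw => (Finset.mem_filter.mp (hSsub hw)).2⟩

/-- Chains of primes in the quotient by the squarefree power are short. -/
private lemma aux_quot_chain {K : Type*} [Field K] {V : Type*} [Fintype V] [DecidableEq V]
    (T : SimpleGraph V) {m k : ℕ} (hm : Fintype.card V = m) (hk1 : 1 ≤ k) (hk2 : k ≤ m)
    (d : LTSeries (PrimeSpectrum
      (MvPolynomial (V ⊕ V) K ⧸ matchingPow K (whiskerGraph T) k))) :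
    d.length ≤ m + k - 1 := by
  classical
  have hcardsum : Fintype.card (V ⊕ V) = 2 * m := by
    rw [Fintype.card_sum, hm]; omega
  have hfmono : StrictMono
      (fun q : PrimeSpectrum (MvPolynomial (V ⊕ V) K ⧸ matchingPow K (whiskerGraph T) k) =>
        PrimeSpectrum.comap (Ideal.Quotient.mk (matchingPow K (whiskerGraph T) k)) q) := by
    apply Monotone.strictMono_of_injective
    · intro a b hab
      rw [← PrimeSpectrum.asIdeal_le_asIdeal] at hab ⊢
      exact Ideal.comap_mono hab
    · intro a b hab
      apply PrimeSpectrum.ext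
      apply Ideal.comap_injective_of_surjective
        (Ideal.Quotient.mk (matchingPow K (whiskerGraph T) k)) Ideal.Quotient.mk_surjective
      exact congrArg PrimeSpectrum.asIdeal hab
  set d' := d.map _ hfmono with hd'
  haveI := d'.head.2
  have hId' : matchingPow K (whiskerGraph T) k ≤ d'.head.asIdeal := by
    intro x hx
    have hd'head : d'.head
        = PrimeSpectrum.comap (Ideal.Quotient.mk (matchingPow K (whiskerGraph T) k)) d.head :=
      LTSeries.head_map d _ hfmono
    rw [hd'head]
    show x ∈ Ideal.comap (Ideal.Quotient.mk (matchingPow K (whiskerGraph T) k)) d.head.asIdeal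
    rw [Ideal.mem_comap, Ideal.Quotient.eq_zero_iff_mem.mpr hx]
    exact Submodule.zero_mem _
  obtain ⟨S, hScard, hSX⟩ := aux_prime_vars (K := K) T hm hk2 d'.head.asIdeal hId'
  obtain ⟨c, hclen, hclast⟩ := aux_exists_chain (K := K) (m - k + 1) S hScard
  have hconn : c.eraseLast.last < d'.head := by
    have h1 : c.eraseLast.last < c.last :=
      RelSeries.eraseLast_last_rel_last c (by omega)
    have h2 : c.last ≤ d'.head := by
      rw [← PrimeSpectrum.asIdeal_le_asIdeal, hclast, Ideal.span_le]
      rintro _ ⟨w, hw, rfl⟩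
      exact hSX w hw
    exact lt_of_lt_of_le h1 h2
  have hfull := aux_ltSeries_le_card (K := K) (c.eraseLast.append d' hconn)
  have hlen : (c.eraseLast.append d' hconn).length
      = (c.length - 1) + d.length + 1 := rfl
  rw [hlen, hcardsum, hclen] at hfull
  omega

end AuxProof
/-- For a Cohen–Macaulay forest `G = W(T_m)`, no prime generated by `m - k`
variables contains `I(G)^{[k]}`; consequently `height(I(G)^{[k]}) ≥ m - k + 1` and
`dim(R/I(G)^{[k]}) ≤ m + k - 1`. -/
theorem whiskerForest_height_dim {K : Type*} [Field K] {V : Type*} [Fintype V] [DecidableEq V]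
    (m : ℕ) (hm : Fintype.card V = m) (T : SimpleGraph V) (hT : T.IsAcyclic)
    (k : ℕ) (hk1 : 1 ≤ k) (hk2 : k ≤ m) :
    (∀ S : Finset (V ⊕ V), S.card = m - k →
        ¬ matchingPow K (whiskerGraph T) k ≤
            Ideal.span ((X : V ⊕ V → MvPolynomial (V ⊕ V) K) '' ↑S)) ∧
      (∀ p : PrimeSpectrum (MvPolynomial (V ⊕ V) K),
          matchingPow K (whiskerGraph T) k ≤ p.asIdeal →
            ((m - k + 1 : ℕ) : ℕ∞) ≤ Order.height p) ∧
      ringKrullDim (MvPolynomial (V ⊕ V) K ⧸ matchingPow K (whiskerGraph T) k) ≤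
        ((m + k - 1 : ℕ) : WithBot (WithTop ℕ)) := by
  classical
  have hcardsum : Fintype.card (V ⊕ V) = 2 * m := by
    rw [Fintype.card_sum, hm]; omega
  refine ⟨?_, ?_, ?_⟩
  · -- Part 1
    intro S hS hle
    obtain ⟨M, D, hMm, hMc, hprod, hD⟩ := aux_matching (K := K) T hm hk2 S (le_of_eq hS)
    have hgen : (∏ e ∈ M, edgeProd K e) ∈ matchingPow K (whiskerGraph T) k :=
      Ideal.subset_span ⟨M, hMm, hMc, rfl⟩
    have hmem := hle hgen
    rw [hprod] at hmem
    exact aux_not_mem_span hD hmem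
  · -- Part 2
    intro p hp
    haveI := p.2
    obtain ⟨S, hScard, hSX⟩ := aux_prime_vars (K := K) T hm hk2 p.asIdeal hp
    obtain ⟨c, hclen, hclast⟩ := aux_exists_chain (K := K) (m - k + 1) S hScard
    have hlastle : c.last ≤ p := by
      rw [← PrimeSpectrum.asIdeal_le_asIdeal, hclast, Ideal.span_le]
      rintro _ ⟨w, hw, rfl⟩
      exact hSX w hw
    have hh := Order.length_le_height hlastle
    rw [hclen] at hh
    exact_mod_cast hh
  · -- Part 3
    show Order.krullDim
      (PrimeSpectrum (MvPolynomial (V ⊕ V) K ⧸ matchingPow K (whiskerGraph T) k)) ≤ _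
    unfold Order.krullDim
    refine iSup_le ?_
    intro d
    exact WithBot.coe_le_coe.mpr (ENat.coe_le_coe.mpr (aux_quot_chain (K := K) T hm hk1 hk2 d))
end
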